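/- Let N ≥ 4, let W be a Weyl tensor on ℝ^N and let (ℓ, n, m_2, …, m_{N−1}) be a null frame. Then the following are equivalent (type N canonical form): (i) W has boost order ≤ −2 with respect to the frame, i.e., every frame component of W vanishes except possibly the components C_{1i1j} = W(n, m_i, n, m_j); (ii) there exists a symmetric bilinear form ψ on ℝ^N with ψ(ℓ,v) = 0 for all v and with vanishing η-trace, such that for all x, y, z, w: W(x,y,z,w) = ⟨ℓ,x⟩⟨ℓ,z⟩ψ(y,w) − ⟨ℓ,x⟩⟨ℓ,w⟩ψ(y,z) − ⟨ℓ,y⟩⟨ℓ,z⟩ψ(x,w) + ⟨ℓ,y⟩⟨ℓ,w⟩ψ(x,z), where ⟨ℓ,x⟩ = η(ℓ,x). In that case C_{1i1j} = ψ(m_i,m_j), and the matrix (ψ(m_i,m_j)) is symmetric with Σ_i ψ(m_i,m_i) = 0. -/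

import Mathlib

/-- The Minkowski symmetric bilinear form of signature `(-,+,…,+)` on `ℝ^N`. -/
def eta {N : ℕ} (x y : Fin N → ℝ) : ℝ :=
  ∑ a : Fin N, (if (a : ℕ) = 0 then -(x a * y a) else x a * y a)

/-- A null frame `(ℓ, n, m_2, …, m_{N-1})` of `ℝ^N`: a basis consisting of two null
vectors `ℓ = f 0`, `n = f 1` with `η(ℓ,n) = 1` and spacelike vectors `m_i = f i`
(`2 ≤ i`) orthonormal and orthogonal to `ℓ` and `n`. -/
def IsNullFrame {N : ℕ} [NeZero N] (f : Fin N → Fin N → ℝ) : Prop :=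
  LinearIndependent ℝ f ∧
  eta (f 0) (f 0) = 0 ∧ eta (f 1) (f 1) = 0 ∧ eta (f 0) (f 1) = 1 ∧
  (∀ i j : Fin N, 2 ≤ (i : ℕ) → 2 ≤ (j : ℕ) →
      eta (f i) (f j) = if i = j then 1 else 0) ∧
  (∀ i : Fin N, 2 ≤ (i : ℕ) → eta (f 0) (f i) = 0 ∧ eta (f 1) (f i) = 0)

/-- A Weyl tensor on `ℝ^N`: a 4-linear form with the pair symmetries
`W(x,y,z,w) = -W(y,x,z,w) = W(z,w,x,y)`, the first Bianchi identity, and all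
`η`-traces zero (the standard basis being `η`-orthonormal, the `η`-trace of
`(u,v) ↦ W(u,x,v,y)` is `∑ₐ η^{aa} W(eₐ,x,eₐ,y)` with `η^{00} = -1`, `η^{aa} = 1`). -/
def IsWeyl {N : ℕ} (W : MultilinearMap ℝ (fun _ : Fin 4 => (Fin N → ℝ)) ℝ) : Prop :=
  (∀ x y z w : Fin N → ℝ, W ![y, x, z, w] = - W ![x, y, z, w]) ∧
  (∀ x y z w : Fin N → ℝ, W ![z, w, x, y] = W ![x, y, z, w]) ∧
  (∀ x y z w : Fin N → ℝ,
    W ![x, y, z, w] + W ![x, z, w, y] + W ![x, w, y, z] = 0) ∧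
  (∀ x y : Fin N → ℝ,
    ∑ a : Fin N, (if (a : ℕ) = 0 then (-1 : ℝ) else 1) *
      W ![Pi.single a 1, x, Pi.single a 1, y] = 0)

/-- Boost weight of a frame index: `b_0 = 1`, `b_1 = -1`, `b_i = 0` for spatial `i`. -/
def bw {N : ℕ} (A : Fin N) : ℤ :=
  if (A : ℕ) = 0 then 1 else if (A : ℕ) = 1 then -1 else 0

/-- The spatial index set `{2, …, N-1}`. -/
def sp (N : ℕ) : Finset (Fin N) := Finset.univ.filter (fun i => 2 ≤ (i : ℕ))

lemma eta_eq {N : ℕ} (x y : Fin N → ℝ) :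
    eta x y = ∑ a : Fin N, (if (a : ℕ) = 0 then (-1 : ℝ) else 1) * x a * y a := by
  unfold eta
  refine Finset.sum_congr rfl fun a _ => ?_
  split <;> ring

lemma eta_comm {N : ℕ} (x y : Fin N → ℝ) : eta x y = eta y x := by
  unfold eta
  refine Finset.sum_congr rfl fun a _ => ?_
  split <;> ring

/-- `eta` as a bilinear map. -/
noncomputable def etaB (N : ℕ) : (Fin N → ℝ) →ₗ[ℝ] (Fin N → ℝ) →ₗ[ℝ] ℝ :=
  LinearMap.mk₂ ℝ eta
    (fun x x' y => by
      simp only [eta_eq, Pi.add_apply, ← Finset.sum_add_distrib]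
      refine Finset.sum_congr rfl fun a _ => by ring)
    (fun c x y => by
      simp only [eta_eq, Pi.smul_apply, smul_eq_mul, Finset.mul_sum]
      refine Finset.sum_congr rfl fun a _ => by ring)
    (fun x y y' => by
      simp only [eta_eq, Pi.add_apply, ← Finset.sum_add_distrib]
      refine Finset.sum_congr rfl fun a _ => by ring)
    (fun c x y => by
      simp only [eta_eq, Pi.smul_apply, smul_eq_mul, Finset.mul_sum]
      refine Finset.sum_congr rfl fun a _ => by ring)

@[simp] lemma etaB_apply {N : ℕ} (x y : Fin N → ℝ) : etaB N x y = eta x y := rfl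

lemma eta_single {N : ℕ} (a : Fin N) (y : Fin N → ℝ) :
    eta (Pi.single a 1) y = (if (a : ℕ) = 0 then (-1 : ℝ) else 1) * y a := by
  rw [eta_eq]
  rw [Finset.sum_eq_single a]
  · simp
  · intro c _ hc
    simp [Pi.single_apply, Ne.symm hc]
  · simp

/-- The canonical type-N multilinear map built from a linear functional and a bilinear form. -/
noncomputable def canon {N : ℕ} (L : (Fin N → ℝ) →ₗ[ℝ] ℝ)
    (ψ : (Fin N → ℝ) →ₗ[ℝ] (Fin N → ℝ) →ₗ[ℝ] ℝ) :
    MultilinearMap ℝ (fun _ : Fin 4 => (Fin N → ℝ)) ℝ where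
  toFun v := L (v 0) * L (v 2) * ψ (v 1) (v 3) - L (v 0) * L (v 3) * ψ (v 1) (v 2)
    - L (v 1) * L (v 2) * ψ (v 0) (v 3) + L (v 1) * L (v 3) * ψ (v 0) (v 2)
  map_update_add' := by
    intro dec m i x y
    have hdec : dec = instDecidableEqFin 4 := Subsingleton.elim _ _
    subst hdec
    fin_cases i <;>
      simp [Function.update_apply, map_add, LinearMap.add_apply] <;> ring
  map_update_smul' := by
    intro dec m i c x
    have hdec : dec = instDecidableEqFin 4 := Subsingleton.elim _ _
    subst hdec
    fin_cases i <;>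
      simp [Function.update_apply, map_smul, LinearMap.smul_apply, smul_eq_mul] <;> ring

@[simp] lemma canon_apply {N : ℕ} (L : (Fin N → ℝ) →ₗ[ℝ] ℝ)
    (ψ : (Fin N → ℝ) →ₗ[ℝ] (Fin N → ℝ) →ₗ[ℝ] ℝ) (v : Fin 4 → (Fin N → ℝ)) :
    canon L ψ v = L (v 0) * L (v 2) * ψ (v 1) (v 3) - L (v 0) * L (v 3) * ψ (v 1) (v 2)
    - L (v 1) * L (v 2) * ψ (v 0) (v 3) + L (v 1) * L (v 3) * ψ (v 0) (v 2) := rfl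

lemma upd1 {N : ℕ} (a b c d x : Fin N → ℝ) :
    Function.update ![a, b, c, d] 1 x = ![a, x, c, d] := by
  funext k; fin_cases k <;> simp [Function.update]

lemma upd3 {N : ℕ} (a b c d x : Fin N → ℝ) :
    Function.update ![a, b, c, d] 3 x = ![a, b, c, x] := by
  funext k; fin_cases k <;> simp [Function.update]

/-- The bilinear form `ψ(x,y) = W(n,x,n,y)`. -/
noncomputable def psiW {N : ℕ} (W : MultilinearMap ℝ (fun _ : Fin 4 => (Fin N → ℝ)) ℝ)
    (n : Fin N → ℝ) : (Fin N → ℝ) →ₗ[ℝ] (Fin N → ℝ) →ₗ[ℝ] ℝ :=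
  LinearMap.mk₂ ℝ (fun x y => W ![n, x, n, y])
    (fun x x' y => by
      show W ![n, x + x', n, y] = W ![n, x, n, y] + W ![n, x', n, y]
      rw [← upd1 n 0 n y x, ← upd1 n 0 n y x', ← upd1 n 0 n y (x + x'), W.map_update_add])
    (fun c x y => by
      show W ![n, c • x, n, y] = c • W ![n, x, n, y]
      rw [← upd1 n 0 n y x, ← upd1 n 0 n y (c • x), W.map_update_smul])
    (fun x y y' => by
      show W ![n, x, n, y + y'] = W ![n, x, n, y] + W ![n, x, n, y']
      rw [← upd3 n x n 0 y, ← upd3 n x n 0 y', ← upd3 n x n 0 (y + y'), W.map_update_add])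
    (fun c x y => by
      show W ![n, x, n, c • y] = c • W ![n, x, n, y]
      rw [← upd3 n x n 0 y, ← upd3 n x n 0 (c • y), W.map_update_smul])

@[simp] lemma psiW_apply {N : ℕ} (W : MultilinearMap ℝ (fun _ : Fin 4 => (Fin N → ℝ)) ℝ)
    (n x y : Fin N → ℝ) : psiW W n x y = W ![n, x, n, y] := rfl

/-- Index involution swapping `0` and `1`. -/
def sig {N : ℕ} [NeZero N] (B : Fin N) : Fin N :=
  if (B : ℕ) = 0 then 1 else if (B : ℕ) = 1 then 0 else B

/-- type **N** canonical form. For a Weyl tensor `W` and a null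
frame with `ℓ = f 0`, the following are equivalent: (i) `W` has boost order `≤ -2`
(only the components `C_{1i1j}` may survive); (ii) there is a symmetric bilinear form
`ψ` with `ψ(ℓ,·) = 0` and vanishing `η`-trace such that
`W(x,y,z,w) = ⟨ℓ,x⟩⟨ℓ,z⟩ψ(y,w) - ⟨ℓ,x⟩⟨ℓ,w⟩ψ(y,z) - ⟨ℓ,y⟩⟨ℓ,z⟩ψ(x,w) + ⟨ℓ,y⟩⟨ℓ,w⟩ψ(x,z)`.
In that case `C_{1i1j} = ψ(m_i,m_j)`, and this matrix is symmetric with vanishing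
spatial trace `∑ᵢ ψ(m_i,m_i) = 0`. -/
theorem stmt_13 (N : ℕ) [NeZero N] (hN : 4 ≤ N)
    (W : MultilinearMap ℝ (fun _ : Fin 4 => (Fin N → ℝ)) ℝ) (hW : IsWeyl W)
    (f : Fin N → Fin N → ℝ) (hf : IsNullFrame f) :
    ((∀ A : Fin 4 → Fin N, (-2 : ℤ) < ∑ k, bw (A k) → W (fun k => f (A k)) = 0) ↔
      (∃ ψ : (Fin N → ℝ) →ₗ[ℝ] (Fin N → ℝ) →ₗ[ℝ] ℝ,
        (∀ x y, ψ x y = ψ y x) ∧ (∀ v, ψ (f 0) v = 0) ∧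
        (∑ a : Fin N, (if (a : ℕ) = 0 then (-1 : ℝ) else 1) *
          ψ (Pi.single a 1) (Pi.single a 1)) = 0 ∧
        (∀ x y z w : Fin N → ℝ, W ![x, y, z, w] =
          eta (f 0) x * eta (f 0) z * ψ y w - eta (f 0) x * eta (f 0) w * ψ y z
            - eta (f 0) y * eta (f 0) z * ψ x w
            + eta (f 0) y * eta (f 0) w * ψ x z))) ∧
    (∀ ψ : (Fin N → ℝ) →ₗ[ℝ] (Fin N → ℝ) →ₗ[ℝ] ℝ,
      (∀ x y, ψ x y = ψ y x) → (∀ v, ψ (f 0) v = 0) →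
      (∑ a : Fin N, (if (a : ℕ) = 0 then (-1 : ℝ) else 1) *
        ψ (Pi.single a 1) (Pi.single a 1)) = 0 →
      (∀ x y z w : Fin N → ℝ, W ![x, y, z, w] =
          eta (f 0) x * eta (f 0) z * ψ y w - eta (f 0) x * eta (f 0) w * ψ y z
            - eta (f 0) y * eta (f 0) z * ψ x w
            + eta (f 0) y * eta (f 0) w * ψ x z) →
      (∀ i j : Fin N, 2 ≤ (i : ℕ) → 2 ≤ (j : ℕ) →
          W ![f 1, f i, f 1, f j] = ψ (f i) (f j)) ∧
        ∑ i ∈ sp N, ψ (f i) (f i) = 0) := by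
  obtain ⟨hli, h00, h11, h01, hij, h0i⟩ := hf
  obtain ⟨ha1, hpair, _hBianchi, htr⟩ := hW
  have hv1 : ((1 : Fin N) : ℕ) = 1 := by
    rw [Fin.val_one']; exact Nat.mod_eq_of_lt (by omega)
  have hv0 : ((0 : Fin N) : ℕ) = 0 := rfl
  have h0ne1 : (0 : Fin N) ≠ 1 := by
    intro hc
    have hcv : ((0 : Fin N) : ℕ) = ((1 : Fin N) : ℕ) := congrArg Fin.val hc
    rw [hv0, hv1] at hcv
    exact one_ne_zero hcv.symm
  -- second-pair antisymmetry
  have ha2 : ∀ x y z w : Fin N → ℝ, W ![x, y, w, z] = - W ![x, y, z, w] := by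
    intro x y z w
    calc W ![x, y, w, z] = W ![w, z, x, y] := hpair w z x y
      _ = - W ![z, w, x, y] := ha1 z w x y
      _ = - W ![x, y, z, w] := by rw [hpair x y z w]
  have hz1 : ∀ x z w : Fin N → ℝ, W ![x, x, z, w] = 0 := by
    intro x z w; have := ha1 x x z w; linarith
  have hz2 : ∀ x y z : Fin N → ℝ, W ![x, y, z, z] = 0 := by
    intro x y z; have := ha2 x y z z; linarith
  -- eta of ℓ against frame vectors
  have heta0 : ∀ B : Fin N, eta (f 0) (f B) = if B = 1 then 1 else 0 := by
    intro B
    by_cases hB0 : (B : ℕ) = 0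
    · have hB : B = 0 := Fin.ext (by rw [hB0, hv0])
      rw [hB, h00, if_neg h0ne1]
    · by_cases hB1 : (B : ℕ) = 1
      · have hB : B = 1 := Fin.ext (by rw [hB1, hv1])
        rw [hB, h01, if_pos rfl]
      · have h2B : 2 ≤ (B : ℕ) := by omega
        have hne : B ≠ 1 := by intro hc; rw [hc, hv1] at hB1; exact hB1 rfl
        rw [(h0i B h2B).1, if_neg hne]
  have hsig0 : sig (0 : Fin N) = 1 := by unfold sig; rw [hv0]; norm_num
  have hsig1 : sig (1 : Fin N) = 0 := by unfold sig; rw [hv1]; norm_num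
  -- full Gram structure
  have hsig : ∀ B D : Fin N, eta (f B) (f D) = if B = sig D then 1 else 0 := by
    intro B D
    by_cases hD0 : (D : ℕ) = 0
    · have hD : D = 0 := Fin.ext (by rw [hD0, hv0])
      rw [hD, eta_comm (f B) (f 0), heta0 B, hsig0]
    · by_cases hD1 : (D : ℕ) = 1
      · have hD : D = 1 := Fin.ext (by rw [hD1, hv1])
        rw [hD, hsig1]
        by_cases hB0 : (B : ℕ) = 0
        · have hB : B = 0 := Fin.ext (by rw [hB0, hv0])
          rw [hB, h01, if_pos rfl]
        · by_cases hB1 : (B : ℕ) = 1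
          · have hB : B = 1 := Fin.ext (by rw [hB1, hv1])
            have hne : (1 : Fin N) ≠ 0 := Ne.symm h0ne1
            rw [hB, h11, if_neg hne]
          · have h2B : 2 ≤ (B : ℕ) := by omega
            have hne : B ≠ 0 := by
              intro hc; rw [hc, hv0] at hB0; exact hB0 rfl
            rw [eta_comm (f B) (f 1), (h0i B h2B).2, if_neg hne]
      · have h2D : 2 ≤ (D : ℕ) := by omega
        have hsigD : sig D = D := by unfold sig; rw [if_neg hD0, if_neg hD1]
        rw [hsigD]
        by_cases hB0 : (B : ℕ) = 0
        · have hB : B = 0 := Fin.ext (by rw [hB0, hv0])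
          have hne : B ≠ D := by intro hc; subst hc; omega
          rw [hB] at hne ⊢
          rw [(h0i D h2D).1, if_neg hne]
        · by_cases hB1 : (B : ℕ) = 1
          · have hB : B = 1 := Fin.ext (by rw [hB1, hv1])
            have hne : B ≠ D := by intro hc; subst hc; omega
            rw [hB] at hne ⊢
            rw [(h0i D h2D).2, if_neg hne]
          · have h2B : 2 ≤ (B : ℕ) := by omega
            rw [hij B D h2B h2D]
  have hsigsig : ∀ B : Fin N, sig (sig B) = B := by
    intro B
    by_cases hB0 : (B : ℕ) = 0
    · have hB : B = 0 := Fin.ext (by rw [hB0, hv0])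
      rw [hB, hsig0, hsig1]
    · by_cases hB1 : (B : ℕ) = 1
      · have hB : B = 1 := Fin.ext (by rw [hB1, hv1])
        rw [hB, hsig1, hsig0]
      · have hsB : sig B = B := by unfold sig; rw [if_neg hB0, if_neg hB1]
        rw [hsB, hsB]
  -- boost weight facts
  have hbw1 : bw (1 : Fin N) = -1 := by unfold bw; rw [hv1]; norm_num
  have hbw0 : bw (0 : Fin N) = 1 := by unfold bw; rw [hv0]; norm_num
  have hbw_nn : ∀ B : Fin N, B ≠ 1 → 0 ≤ bw B := by
    intro B hB; unfold bw; split_ifs with p q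
    · norm_num
    · exact absurd (Fin.ext (by rw [q, hv1])) hB
    · norm_num
  have hbw_np : ∀ B : Fin N, B ≠ 0 → bw B ≤ 0 := by
    intro B hB; unfold bw; split_ifs with p q
    · exact absurd (Fin.ext (by rw [p, hv0])) hB
    · norm_num
    · norm_num
  -- the frame as a basis
  have hcard : Fintype.card (Fin N) = Module.finrank ℝ (Fin N → ℝ) := by
    simp [Module.finrank_fintype_fun_eq_card]
  let b : Module.Basis (Fin N) ℝ (Fin N → ℝ) := basisOfLinearIndependentOfCardEqFinrank hli hcard
  have hb : ⇑b = f := coe_basisOfLinearIndependentOfCardEqFinrank hli hcard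
  have hexp : ∀ (ψ : (Fin N → ℝ) →ₗ[ℝ] (Fin N → ℝ) →ₗ[ℝ] ℝ) (x y : Fin N → ℝ),
      ψ x y = ∑ B : Fin N, b.repr x B * ψ (f B) y := by
    intro ψ x y
    conv_lhs => rw [← b.sum_repr x]
    rw [map_sum, LinearMap.sum_apply]
    refine Finset.sum_congr rfl fun B _ => ?_
    rw [map_smul, LinearMap.smul_apply, smul_eq_mul, congrFun hb B]
  have hrepr : ∀ (x : Fin N → ℝ) (B : Fin N), b.repr x B = eta x (f (sig B)) := by
    intro x B
    have h1 : eta x (f (sig B)) = ∑ C : Fin N, b.repr x C * eta (f C) (f (sig B)) := by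
      simpa using hexp (etaB N) x (f (sig B))
    have h2 : ∀ C ∈ Finset.univ, C ≠ B → b.repr x C * eta (f C) (f (sig B)) = 0 := by
      intro C _ hC
      rw [hsig C (sig B), hsigsig B, if_neg hC, mul_zero]
    rw [h1, Finset.sum_eq_single_of_mem B (Finset.mem_univ B) h2, hsig B (sig B), hsigsig B,
      if_pos rfl, mul_one]
  have hsingle_sum : ∀ y : Fin N → ℝ, ∑ a : Fin N, y a • (Pi.single a 1 : Fin N → ℝ) = y := by
    intro y
    have h2 : ∀ a : Fin N, y a • (Pi.single a 1 : Fin N → ℝ) = Pi.single a (y a) := by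
      intro a; funext j; by_cases hj : j = a <;> simp [Pi.single_apply, hj]
    simp only [h2]
    exact Finset.univ_sum_single y
  have hsplit : ∀ g : Fin N → ℝ, ∑ B : Fin N, g B = g 0 + g 1 + ∑ B ∈ sp N, g B := by
    intro g
    have h1notin : (1 : Fin N) ∉ sp N := by
      simp only [sp, Finset.mem_filter, Finset.mem_univ, true_and, not_le]
      rw [hv1]; omega
    have h0notin : (0 : Fin N) ∉ insert 1 (sp N) := by
      simp only [Finset.mem_insert, sp, Finset.mem_filter, Finset.mem_univ, true_and, not_or]
      refine ⟨h0ne1, ?_⟩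
      rw [not_le, hv0]; omega
    have huniv : (Finset.univ : Finset (Fin N)) = insert 0 (insert 1 (sp N)) := by
      ext B
      simp only [Finset.mem_univ, Finset.mem_insert, sp, Finset.mem_filter, true_iff, true_and]
      by_cases hB0 : (B : ℕ) = 0
      · left; exact Fin.ext (by rw [hB0, hv0])
      · by_cases hB1 : (B : ℕ) = 1
        · right; left; exact Fin.ext (by rw [hB1, hv1])
        · right; right; omega
    rw [huniv, Finset.sum_insert h0notin, Finset.sum_insert h1notin, add_assoc]
  have htrace_frame : ∀ ψ : (Fin N → ℝ) →ₗ[ℝ] (Fin N → ℝ) →ₗ[ℝ] ℝ,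
      (∑ a : Fin N, (if (a : ℕ) = 0 then (-1 : ℝ) else 1) *
        ψ (Pi.single a 1) (Pi.single a 1))
      = ψ (f 0) (f 1) + ψ (f 1) (f 0) + ∑ i ∈ sp N, ψ (f i) (f i) := by
    intro ψ
    have step1 : ∀ a : Fin N, (if (a : ℕ) = 0 then (-1 : ℝ) else 1) *
        ψ (Pi.single a 1) (Pi.single a 1)
        = ∑ B : Fin N, (f (sig B)) a * ψ (f B) (Pi.single a 1) := by
      intro a
      rw [hexp ψ (Pi.single a 1) (Pi.single a 1), Finset.mul_sum]
      refine Finset.sum_congr rfl fun B _ => ?_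
      rw [hrepr, eta_single]
      split_ifs <;> ring
    calc (∑ a : Fin N, (if (a : ℕ) = 0 then (-1 : ℝ) else 1) *
        ψ (Pi.single a 1) (Pi.single a 1))
        = ∑ a : Fin N, ∑ B : Fin N, (f (sig B)) a * ψ (f B) (Pi.single a 1) :=
          Finset.sum_congr rfl fun a _ => step1 a
      _ = ∑ B : Fin N, ∑ a : Fin N, (f (sig B)) a * ψ (f B) (Pi.single a 1) :=
          Finset.sum_comm
      _ = ∑ B : Fin N, ψ (f B) (f (sig B)) := by
          refine Finset.sum_congr rfl fun B _ => ?_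
          conv_rhs => rw [← hsingle_sum (f (sig B))]
          rw [map_sum]
          refine Finset.sum_congr rfl fun a _ => ?_
          rw [map_smul, smul_eq_mul]
      _ = ψ (f 0) (f (sig 0)) + ψ (f 1) (f (sig 1)) + ∑ B ∈ sp N, ψ (f B) (f (sig B)) :=
          hsplit _
      _ = ψ (f 0) (f 1) + ψ (f 1) (f 0) + ∑ i ∈ sp N, ψ (f i) (f i) := by
          rw [hsig0, hsig1]
          congr 1
          refine Finset.sum_congr rfl fun B hB => ?_
          have h2B : 2 ≤ (B : ℕ) := by
            simp only [sp, Finset.mem_filter, Finset.mem_univ, true_and] at hB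
            exact hB
          have hB0 : ¬((B : ℕ) = 0) := by omega
          have hB1 : ¬((B : ℕ) = 1) := by omega
          rw [show sig B = B from by unfold sig; rw [if_neg hB0, if_neg hB1]]
  constructor
  · constructor
    · -- forward direction
      intro hbo
      have hbo' : ∀ B C D E : Fin N, (-2 : ℤ) < bw B + bw C + bw D + bw E →
          W ![f B, f C, f D, f E] = 0 := by
        intro B C D E hlt
        have hsum : (-2 : ℤ) < ∑ k, bw ((![B, C, D, E] : Fin 4 → Fin N) k) := by
          rw [Fin.sum_univ_four]
          simpa using hlt
        have hA := hbo ![B, C, D, E] hsum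
        have hv : (fun k => f ((![B, C, D, E] : Fin 4 → Fin N) k)) = ![f B, f C, f D, f E] := by
          funext k; fin_cases k <;> rfl
        rwa [hv] at hA
      have hψ0 : ∀ v, psiW W (f 1) (f 0) v = 0 := by
        have hmap : psiW W (f 1) (f 0) = 0 := by
          refine b.ext fun B => ?_
          rw [congrFun hb B, LinearMap.zero_apply, psiW_apply]
          by_cases hB : B = 1
          · rw [hB]; exact hz2 (f 1) (f 0) (f 1)
          · refine hbo' 1 0 1 B ?_
            have := hbw_nn B hB
            rw [hbw1, hbw0]
            omega
        intro v; rw [hmap, LinearMap.zero_apply]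
      have hψsym : ∀ x y, psiW W (f 1) x y = psiW W (f 1) y x := fun x y =>
        hpair (f 1) y (f 1) x
      have hconv : ∀ a : Fin N,
          W ![f 1, Pi.single a 1, f 1, Pi.single a 1]
            = W ![Pi.single a 1, f 1, Pi.single a 1, f 1] := by
        intro a
        rw [ha1 (f 1) (Pi.single a 1) (Pi.single a 1) (f 1),
          ha2 (f 1) (Pi.single a 1) (f 1) (Pi.single a 1), neg_neg]
      have hψtr : (∑ a : Fin N, (if (a : ℕ) = 0 then (-1 : ℝ) else 1) *
          psiW W (f 1) (Pi.single a 1) (Pi.single a 1)) = 0 := by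
        have hc : (∑ a : Fin N, (if (a : ℕ) = 0 then (-1 : ℝ) else 1) *
            psiW W (f 1) (Pi.single a 1) (Pi.single a 1))
            = ∑ a : Fin N, (if (a : ℕ) = 0 then (-1 : ℝ) else 1) *
              W ![Pi.single a 1, f 1, Pi.single a 1, f 1] :=
          Finset.sum_congr rfl fun a _ => by rw [psiW_apply, hconv a]
        rw [hc]
        exact htr (f 1) (f 1)
      have hmain : W = canon (etaB N (f 0)) (psiW W (f 1)) := by
        refine Module.Basis.ext_multilinear (fun _ => b) fun v => ?_
        have hgoal : (fun i => b (v i)) = ![f (v 0), f (v 1), f (v 2), f (v 3)] := by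
          funext k; fin_cases k <;> simp [hb]
        rw [hgoal]
        show W ![f (v 0), f (v 1), f (v 2), f (v 3)] =
          eta (f 0) (f (v 0)) * eta (f 0) (f (v 2)) * W ![f 1, f (v 1), f 1, f (v 3)]
          - eta (f 0) (f (v 0)) * eta (f 0) (f (v 3)) * W ![f 1, f (v 1), f 1, f (v 2)]
          - eta (f 0) (f (v 1)) * eta (f 0) (f (v 2)) * W ![f 1, f (v 0), f 1, f (v 3)]
          + eta (f 0) (f (v 1)) * eta (f 0) (f (v 3)) * W ![f 1, f (v 0), f 1, f (v 2)]
        rw [heta0 (v 0), heta0 (v 1), heta0 (v 2), heta0 (v 3)]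
        by_cases h0 : v 0 = 1 <;> by_cases h1 : v 1 = 1 <;>
          by_cases h2 : v 2 = 1 <;> by_cases h3 : v 3 = 1
        · simp [h0, h1, h2, h3, hz1]
        · simp [h0, h1, h2, h3, hz1]
        · simp [h0, h1, h2, h3, hz1]
        · simp [h0, h1, h2, h3, hz1]
        · simp [h0, h1, h2, h3, hz2]
        · simp [h0, h1, h2, h3]
        · simp [h0, h1, h2, h3]
          exact ha2 (f 1) (f (v 1)) (f 1) (f (v 2))
        · simp [h0, h1, h2, h3]
          refine hbo' 1 (v 1) (v 2) (v 3) ?_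
          have := hbw_nn _ h1; have := hbw_nn _ h2; have := hbw_nn _ h3
          rw [hbw1]; omega
        · simp [h0, h1, h2, h3, hz2]
        · simp [h0, h1, h2, h3]
          exact ha1 (f 1) (f (v 0)) (f 1) (f (v 3))
        · simp [h0, h1, h2, h3]
          rw [ha1 (f 1) (f (v 0)) (f (v 2)) (f 1), ha2 (f 1) (f (v 0)) (f 1) (f (v 2)), neg_neg]
        · simp [h0, h1, h2, h3]
          refine hbo' (v 0) 1 (v 2) (v 3) ?_
          have := hbw_nn _ h0; have := hbw_nn _ h2; have := hbw_nn _ h3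
          rw [hbw1]; omega
        · simp [h0, h1, h2, h3, hz2]
        · simp [h0, h1, h2, h3]
          refine hbo' (v 0) (v 1) 1 (v 3) ?_
          have := hbw_nn _ h0; have := hbw_nn _ h1; have := hbw_nn _ h3
          rw [hbw1]; omega
        · simp [h0, h1, h2, h3]
          refine hbo' (v 0) (v 1) (v 2) 1 ?_
          have := hbw_nn _ h0; have := hbw_nn _ h1; have := hbw_nn _ h2
          rw [hbw1]; omega
        · simp [h0, h1, h2, h3]
          refine hbo' (v 0) (v 1) (v 2) (v 3) ?_
          have := hbw_nn _ h0; have := hbw_nn _ h1; have := hbw_nn _ h2; have := hbw_nn _ h3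
          omega
      refine ⟨psiW W (f 1), hψsym, hψ0, hψtr, ?_⟩
      intro x y z w
      conv_lhs => rw [hmain]
      rfl
    · -- backward direction
      rintro ⟨ψ, hsym, hψ0, -, hform⟩ A hA
      have hkey : ∀ B C D E : Fin N, (-2 : ℤ) < bw B + bw C + bw D + bw E →
          eta (f 0) (f B) * eta (f 0) (f C) * ψ (f D) (f E) = 0 := by
        intro B C D E hlt
        by_cases hB : B = 1
        · by_cases hC : C = 1
          · by_cases hD : D = 0
            · rw [hD, hψ0, mul_zero]
            · by_cases hE : E = 0
              · rw [hE, hsym (f D) (f 0), hψ0, mul_zero]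
              · exfalso
                subst hB; subst hC
                have hd := hbw_np D hD; have he := hbw_np E hE
                rw [hbw1] at hlt
                omega
          · rw [heta0 C, if_neg hC, mul_zero, zero_mul]
        · rw [heta0 B, if_neg hB, zero_mul, zero_mul]
      have hv : (fun k => f (A k)) = ![f (A 0), f (A 1), f (A 2), f (A 3)] := by
        funext k; fin_cases k <;> rfl
      simp only [Fin.sum_univ_four] at hA
      rw [hv, hform (f (A 0)) (f (A 1)) (f (A 2)) (f (A 3)),
        hkey (A 0) (A 2) (A 1) (A 3) (by omega),
        hkey (A 0) (A 3) (A 1) (A 2) (by omega),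
        hkey (A 1) (A 2) (A 0) (A 3) (by omega),
        hkey (A 1) (A 3) (A 0) (A 2) (by omega)]
      ring
  · -- "in that case" part
    intro ψ hsym hψ0 htrψ hform
    constructor
    · intro i j hi hj
      rw [hform (f 1) (f i) (f 1) (f j), h01, (h0i i hi).1, (h0i j hj).1]
      ring
    · have h := htrace_frame ψ
      rw [htrψ] at h
      have e1 : ψ (f 0) (f 1) = 0 := hψ0 (f 1)
      have e2 : ψ (f 1) (f 0) = 0 := by rw [hsym (f 1) (f 0)]; exact hψ0 (f 1)
      linarith [h]
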